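/- (Welding integral identity.) Let $\xi : [0,T] \to \mathbb{R}$ be a continuous driver that welds points $x_0 < \xi(0) < y_0$ at common finite hitting time $\tau$. Then $y_0^2 - x_0^2 = 4 \int_0^{\tau} \frac{\xi(t)\,\big(y(t) - x(t)\big)}{\big(\xi(t) - x(t)\big)\big(y(t) - \xi(t)\big)}\, dt$, where $x(t), y(t)$ are the flows of $x_0, y_0$ under the upward Loewner equation driven by $\xi$. -/

import Mathlib

open MeasureTheory Set intervalIntegral

theorem statement14 (τ : ℝ) (hτ : 0 < τ) (ξ x y : ℝ → ℝ)
    (hξ : ContinuousOn ξ (Set.Icc 0 τ))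
    (hb : x 0 < ξ 0 ∧ ξ 0 < y 0)
    (hodex : ∀ t ∈ Set.Ico (0:ℝ) τ, HasDerivWithinAt x (-2 / (x t - ξ t)) (Set.Ici 0) t)
    (hodey : ∀ t ∈ Set.Ico (0:ℝ) τ, HasDerivWithinAt y (-2 / (y t - ξ t)) (Set.Ici 0) t)
    (horder : ∀ t ∈ Set.Ico (0:ℝ) τ, x t < ξ t ∧ ξ t < y t)
    (hcx : ContinuousOn x (Set.Icc 0 τ)) (hcy : ContinuousOn y (Set.Icc 0 τ))
    (hweldx : x τ = ξ τ) (hweldy : y τ = ξ τ) :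
    MeasureTheory.IntegrableOn
        (fun t => ξ t * (y t - x t) / ((ξ t - x t) * (y t - ξ t))) (Set.Ioo 0 τ) ∧
      (y 0) ^ 2 - (x 0) ^ 2 =
        4 * ∫ t in (0:ℝ)..τ, ξ t * (y t - x t) / ((ξ t - x t) * (y t - ξ t)) := by
  have hIco : Set.Ioo (0:ℝ) τ ⊆ Set.Ico 0 τ := fun t ht => ⟨le_of_lt ht.1, ht.2⟩
  have hIcc : Set.Ioo (0:ℝ) τ ⊆ Set.Icc 0 τ := Set.Ioo_subset_Icc_self
  have hxpos : ∀ t ∈ Set.Ico (0:ℝ) τ, 0 < ξ t - x t := fun t ht => by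
    have := (horder t ht).1; linarith
  have hypos : ∀ t ∈ Set.Ico (0:ℝ) τ, 0 < y t - ξ t := fun t ht => by
    have := (horder t ht).2; linarith
  have hdx : ∀ t ∈ Set.Ioo (0:ℝ) τ, HasDerivAt x (-2 / (x t - ξ t)) t := fun t ht =>
    (hodex t (hIco ht)).hasDerivAt (Ici_mem_nhds ht.1)
  have hdy : ∀ t ∈ Set.Ioo (0:ℝ) τ, HasDerivAt y (-2 / (y t - ξ t)) t := fun t ht =>
    (hodey t (hIco ht)).hasDerivAt (Ici_mem_nhds ht.1)
  set g : ℝ → ℝ := fun t => ξ t * (y t - x t) / ((ξ t - x t) * (y t - ξ t)) with hg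
  set h : ℝ → ℝ := fun t => 2 * ((y t - x t) / ((ξ t - x t) * (y t - ξ t))) with hh
  -- derivative of x - y is h
  have hdiff : ∀ t ∈ Set.Ioo (0:ℝ) τ, HasDerivAt (fun s => x s - y s) (h t) t := by
    intro t ht
    have H := (hdx t ht).fun_sub (hdy t ht)
    refine H.congr_deriv ?_
    have h1 := (hxpos t (hIco ht)).ne'
    have h2 := (hypos t (hIco ht)).ne'
    have h1' : x t - ξ t ≠ 0 := by intro e; apply h1; linarith
    simp only [hh]
    field_simp
    ring
  have hnonneg : ∀ t ∈ Set.Ioo (0:ℝ) τ, 0 ≤ h t := by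
    intro t ht
    have h1 := hxpos t (hIco ht)
    have h2 := hypos t (hIco ht)
    have : 0 ≤ (y t - x t) / ((ξ t - x t) * (y t - ξ t)) :=
      div_nonneg (by linarith) (le_of_lt (mul_pos h1 h2))
    simp only [hh]; linarith
  have hint_h : IntegrableOn h (Set.Ioo 0 τ) :=
    (integrableOn_deriv_of_nonneg (hcx.sub hcy) hdiff hnonneg).mono_set Set.Ioo_subset_Ioc_self
  -- bound on ξ
  obtain ⟨C, hC⟩ := isCompact_Icc.exists_bound_of_continuousOn hξ
  have hC0 : 0 ≤ C := le_trans (norm_nonneg _) (hC 0 ⟨le_refl _, hτ.le⟩)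
  -- integrability of g
  have hgmeas : AEStronglyMeasurable g (volume.restrict (Set.Ioo 0 τ)) := by
    have hcont : ContinuousOn g (Set.Ioo 0 τ) := by
      apply ContinuousOn.div
      · exact ((hξ.mono hIcc).mul ((hcy.mono hIcc).sub (hcx.mono hIcc)))
      · exact ((hξ.mono hIcc).sub (hcx.mono hIcc)).mul ((hcy.mono hIcc).sub (hξ.mono hIcc))
      · intro t ht
        exact (mul_pos (hxpos t (hIco ht)) (hypos t (hIco ht))).ne'
    exact hcont.aestronglyMeasurable measurableSet_Ioo
  have hintg : IntegrableOn g (Set.Ioo 0 τ) := by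
    apply Integrable.mono' (hint_h.const_mul C) hgmeas
    rw [MeasureTheory.ae_restrict_iff' measurableSet_Ioo]
    refine MeasureTheory.ae_of_all _ fun t ht => ?_
    have h1 := hxpos t (hIco ht)
    have h2 := hypos t (hIco ht)
    have hd : 0 ≤ (y t - x t) / ((ξ t - x t) * (y t - ξ t)) :=
      div_nonneg (by linarith) (le_of_lt (mul_pos h1 h2))
    have hxi : |ξ t| ≤ C := hC t (hIcc ht)
    have : ‖g t‖ = |ξ t| * ((y t - x t) / ((ξ t - x t) * (y t - ξ t))) := by
      simp only [hg, Real.norm_eq_abs, mul_div_assoc, abs_mul, abs_of_nonneg hd]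
    rw [this]
    calc |ξ t| * ((y t - x t) / ((ξ t - x t) * (y t - ξ t)))
        ≤ C * ((y t - x t) / ((ξ t - x t) * (y t - ξ t))) := by
          exact mul_le_mul_of_nonneg_right hxi hd
      _ ≤ C * h t := by
          simp only [hh]; nlinarith
  refine ⟨hintg, ?_⟩
  -- FTC
  have hii : IntervalIntegrable g volume 0 τ := by
    rw [intervalIntegrable_iff_integrableOn_Ioc_of_le hτ.le,
      integrableOn_Ioc_iff_integrableOn_Ioo' (by simp)]
    exact hintg
  have hdG : ∀ t ∈ Set.Ioo (0:ℝ) τ, HasDerivAt (fun s => (x s ^ 2 - y s ^ 2) / 4) (g t) t := by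
    intro t ht
    have Hx := (hdx t ht).fun_pow 2
    have Hy := (hdy t ht).fun_pow 2
    have H := (Hx.fun_sub Hy).div_const 4
    refine H.congr_deriv ?_
    have h1 := (hxpos t (hIco ht)).ne'
    have h2 := (hypos t (hIco ht)).ne'
    have h1' : x t - ξ t ≠ 0 := by intro e; apply h1; linarith
    simp only [hg, Nat.cast_ofNat, pow_one]
    field_simp
    ring
  have hcont : ContinuousOn (fun s => (x s ^ 2 - y s ^ 2) / 4) (Set.Icc 0 τ) :=
    ((hcx.pow 2).sub (hcy.pow 2)).div_const 4
  have hftc := intervalIntegral.integral_eq_sub_of_hasDerivAt_of_le hτ.le hcont hdG hii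
  rw [hweldx, hweldy] at hftc
  have : (∫ t in (0:ℝ)..τ, g t) = (y 0 ^ 2 - x 0 ^ 2) / 4 := by
    rw [hftc]; ring
  rw [hg] at this
  linarith [this]
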